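/- Let p be a prime, n ≥ 1, 1 ≤ t ≤ n, let {V_1,…,V_t} be a partition of {1,…,n} into nonempty sets with m_r = |V_r|, and let π_r : {1,…,m_r} → V_r be bijections. Fix d_1,…,d_n ∈ Z_p and define the EBF f : (Z_p)^n → Z_p by f(x) = Σ_{r=1}^t Σ_{α=1}^{m_r−1} x_{π_r(α)} x_{π_r(α+1)} + Σ_{α=1}^n d_α x_α (arithmetic in Z_p). For h = (h_1,…,h_t) ∈ (Z_p)^t let C_h be the ordered family of p^t sequences c_h^s = ψ(f + Σ_{r=1}^t s_r x_{π_r(1)} + Σ_{r=1}^t h_r x_{π_r(m_r)}), indexed by s = (s_1,…,s_t) ∈ (Z_p)^t. Then {C_h : h ∈ (Z_p)^t} is a (p^t, p^t, p^n)-CCC: for all h, h′ ∈ (Z_p)^t and all integers u with |u| < p^n, Σ_{s∈(Z_p)^t} γ(c_h^s, c_{h′}^s)(u) equals p^{n+t} if h = h′ and u = 0, and equals 0 if h = h′ and u ≠ 0, and equals 0 for every u if h ≠ h′. -/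
import Mathlib


open Finset

/-- The `k`-th base-`p` digit of `x`, viewed as an element of `ZMod p`
(so `x = ∑ₖ xₖ pᵏ` with `xₖ = digitZ p x k`). -/
def digitZ (p x k : ℕ) : ZMod p := ((x / p ^ k) % p : ℕ)

/-- The complex-valued sequence `ψ(f)` of length `p^m` associated with an
extended Boolean function `f : (Z_p)^m → Z_p`: its `x`-th entry is `ω^{f(x₁,…,x_m)}`
where `ω = exp(2πi/p)` and `(x₁,…,x_m)` are the base-`p` digits of `x`. -/
noncomputable def psiSeq (p m : ℕ) (f : (Fin m → ZMod p) → ZMod p) : ℕ → ℂ :=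
  fun x =>
    Complex.exp (2 * Real.pi * Complex.I * ((f fun k => digitZ p x (k : ℕ)).val : ℂ) / p)

/-- Aperiodic cross-correlation of two length-`L` complex sequences at integer shift `u`:
`γ(a,b)(u) = ∑_{0 ≤ i, j < L, j - i = u} a i * conj (b j)`, which agrees with the usual
piecewise definition for `|u| < L`. -/
noncomputable def aper (L : ℕ) (a b : ℕ → ℂ) (u : ℤ) : ℂ :=
  ∑ i ∈ Finset.range L, ∑ j ∈ Finset.range L,
    if (j : ℤ) - (i : ℤ) = u then a i * (starRingEnd ℂ) (b j) else 0

namespace Stmt0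

variable {p n t : ℕ}

section Chars

variable [NeZero p]

noncomputable def e (p : ℕ) [NeZero p] : AddChar (ZMod p) ℂ := ZMod.stdAddChar

lemma e_apply (a : ZMod p) :
    e p a = Complex.exp (2 * Real.pi * Complex.I * (a.val : ℂ) / p) := by
  rw [e, ZMod.stdAddChar_apply, ZMod.toCircle_apply]

lemma e_sum {ι : Type*} (s : Finset ι) (g : ι → ZMod p) :
    e p (∑ i ∈ s, g i) = ∏ i ∈ s, e p (g i) := by
  classical
  induction s using Finset.cons_induction with
  | empty => simp
  | cons a s ha ih => rw [Finset.sum_cons, Finset.prod_cons, AddChar.map_add_eq_mul, ih]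

lemma e_conj (a : ZMod p) : (starRingEnd ℂ) (e p a) = e p (-a) := by
  rw [e, ZMod.stdAddChar_apply, ZMod.stdAddChar_apply, AddChar.map_neg_eq_inv,
    ← Circle.coe_inv_eq_conj]

lemma e_sum_mul (w : ZMod p) :
    ∑ c : ZMod p, e p (c * w) = if w = 0 then (p : ℂ) else 0 := by
  rw [e, AddChar.sum_mulShift w (ZMod.isPrimitive_stdAddChar p)]
  simp [ZMod.card]

def enc {n : ℕ} (x : Fin n → ZMod p) : ℕ :=
  (finFunctionFinEquiv (fun k => (⟨(x k).val, ZMod.val_lt _⟩ : Fin p)) : ℕ)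

lemma enc_lt {n : ℕ} (x : Fin n → ZMod p) : enc x < p ^ n := (finFunctionFinEquiv _).isLt

lemma enc_spec {n : ℕ} (x : Fin n → ZMod p) :
    enc x = ∑ k : Fin n, (x k).val * p ^ (k : ℕ) := finFunctionFinEquiv_apply _

lemma digit_enc {n : ℕ} (x : Fin n → ZMod p) (k : Fin n) :
    digitZ p (enc x) (k : ℕ) = x k := by
  have h1 : ((finFunctionFinEquiv.symm
      (finFunctionFinEquiv (fun k => (⟨(x k).val, ZMod.val_lt _⟩ : Fin p)))) k : ℕ)
      = (x k).val := by
    rw [Equiv.symm_apply_apply]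
  have h2 : ((finFunctionFinEquiv.symm
      (finFunctionFinEquiv (fun k => (⟨(x k).val, ZMod.val_lt _⟩ : Fin p)))) k : ℕ)
      = enc x / p ^ (k : ℕ) % p := rfl
  unfold digitZ
  rw [← h2, h1]
  simp [ZMod.natCast_val]

lemma enc_digit {n : ℕ} {i : ℕ} (hi : i < p ^ n) :
    enc (fun k : Fin n => digitZ p i (k : ℕ)) = i := by
  have key : (fun k : Fin n => (⟨(digitZ p i (k : ℕ)).val, ZMod.val_lt _⟩ : Fin p))
      = finFunctionFinEquiv.symm ⟨i, hi⟩ := by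
    funext k
    have h2 : ((finFunctionFinEquiv.symm (⟨i, hi⟩ : Fin (p ^ n))) k : ℕ)
        = i / p ^ (k : ℕ) % p := rfl
    apply Fin.ext
    rw [h2]
    show (digitZ p i (k : ℕ)).val = _
    unfold digitZ
    rw [ZMod.val_natCast]
    exact Nat.mod_mod_of_dvd _ dvd_rfl
  unfold enc
  rw [key, Equiv.apply_symm_apply]

lemma enc_inj {n : ℕ} : Function.Injective (enc (p := p) (n := n)) := by
  intro x y hxy
  funext k
  rw [← digit_enc x k, ← digit_enc y k, hxy]

lemma sum_enc {n : ℕ} (φ : ℕ → ℂ) :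
    ∑ i ∈ Finset.range (p ^ n), φ i = ∑ x : Fin n → ZMod p, φ (enc x) := by
  refine Finset.sum_nbij' (fun i => fun k : Fin n => digitZ p i (k : ℕ)) enc
    (fun a _ => Finset.mem_univ _) (fun x _ => Finset.mem_range.2 (enc_lt x))
    (fun i hi => enc_digit (Finset.mem_range.1 hi)) (fun x _ => funext fun k => digit_enc x k)
    (fun i hi => by rw [enc_digit (Finset.mem_range.1 hi)])

lemma enc_update {n : ℕ} (x : Fin n → ZMod p) (k : Fin n) (w : ZMod p) :
    (enc (Function.update x k w) : ℤ)
      = enc x + ((w.val : ℤ) - ((x k).val : ℤ)) * (p : ℤ) ^ (k : ℕ) := by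
  rw [enc_spec, enc_spec]
  push_cast
  rw [← sub_eq_iff_eq_add']
  rw [← Finset.sum_sub_distrib]
  rw [Finset.sum_eq_single k]
  · rw [Function.update_self]; ring
  · intro b _ hb
    rw [Function.update_of_ne hb]; ring
  · intro habs; exact absurd (Finset.mem_univ k) habs

lemma lin_sum {n : ℕ} (a : Fin n → ZMod p) :
    ∑ x : Fin n → ZMod p, e p (∑ k : Fin n, a k * x k)
      = ∏ k : Fin n, (if a k = 0 then (p : ℂ) else 0) := by
  rw [Finset.sum_congr rfl fun x _ => e_sum Finset.univ (fun k => a k * x k)]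
  rw [← Fintype.prod_sum (f := fun (k : Fin n) (c : ZMod p) => e p (a k * c))]
  refine Finset.prod_congr rfl fun k _ => ?_
  simp_rw [mul_comm (a k)]
  exact e_sum_mul _

end Chars

variable (m : Fin t → ℕ) (π : Fin t → ℕ → Fin n)

lemma pi_inj' (hπ : Function.Injective fun q : Σ r : Fin t, Fin (m r) => π q.1 (q.2 : ℕ))
    {r r' : Fin t} {a a' : ℕ} (ha : a < m r) (ha' : a' < m r')
    (hE : π r a = π r' a') : r = r' ∧ a = a' := by
  have h := hπ (a₁ := ⟨r, ⟨a, ha⟩⟩) (a₂ := ⟨r', ⟨a', ha'⟩⟩) hE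
  obtain ⟨h1, h2⟩ := Sigma.mk.inj_iff.1 h
  subst h1
  exact ⟨rfl, congrArg Fin.val (eq_of_heq h2)⟩

def bad (x y : Fin n → ZMod p) : Finset (Σ r : Fin t, Fin (m r)) :=
  Finset.univ.filter fun q => x (π q.1 (q.2 : ℕ)) ≠ y (π q.1 (q.2 : ℕ))

lemma mem_bad {x y : Fin n → ZMod p} {q : Σ r : Fin t, Fin (m r)} :
    q ∈ bad m π x y ↔ x (π q.1 (q.2 : ℕ)) ≠ y (π q.1 (q.2 : ℕ)) := by
  simp [bad]

lemma bad_nonempty (hπ : Function.Surjective fun q : Σ r : Fin t, Fin (m r) => π q.1 (q.2 : ℕ))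
    {x y : Fin n → ZMod p} (hxy : x ≠ y) : (bad m π x y).Nonempty := by
  obtain ⟨k, hk⟩ := Function.ne_iff.1 hxy
  obtain ⟨q, hq⟩ := hπ k
  exact ⟨q, (mem_bad m π).2 (by simp only [] at hq; rw [hq]; exact hk)⟩

def pick1 (ht : 0 < t) (B : Finset (Σ r : Fin t, Fin (m r))) : Fin t :=
  if hB : (B.image Sigma.fst).Nonempty then (B.image Sigma.fst).min' hB else ⟨0, ht⟩

def pick2 (B : Finset (Σ r : Fin t, Fin (m r))) (r : Fin t) : ℕ :=
  if hB : ((B.filter fun q => q.1 = r).image fun q => (q.2 : ℕ)).Nonempty then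
    ((B.filter fun q => q.1 = r).image fun q => (q.2 : ℕ)).min' hB else 0

lemma pick_spec (ht : 0 < t) (B : Finset (Σ r : Fin t, Fin (m r))) (hB : B.Nonempty) :
    (∃ q ∈ B, q.1 = pick1 m ht B ∧ pick2 m B (pick1 m ht B) = (q.2 : ℕ)) ∧
      (∀ q ∈ B, q.1 = pick1 m ht B → pick2 m B (pick1 m ht B) ≤ (q.2 : ℕ)) := by
  have h1 : (B.image Sigma.fst).Nonempty := hB.image _
  have hr : pick1 m ht B ∈ B.image Sigma.fst := by
    rw [pick1, dif_pos h1]; exact Finset.min'_mem _ _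
  obtain ⟨q0, hq0B, hq0⟩ := Finset.mem_image.1 hr
  have h2 : ((B.filter fun q => q.1 = pick1 m ht B).image fun q => (q.2 : ℕ)).Nonempty :=
    ⟨(q0.2 : ℕ), Finset.mem_image.2 ⟨q0, Finset.mem_filter.2 ⟨hq0B, hq0⟩, rfl⟩⟩
  have ha : pick2 m B (pick1 m ht B)
      ∈ (B.filter fun q => q.1 = pick1 m ht B).image fun q => (q.2 : ℕ) := by
    rw [pick2, dif_pos h2]; exact Finset.min'_mem _ _
  obtain ⟨q1, hq1, hq1v⟩ := Finset.mem_image.1 ha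
  obtain ⟨hq1B, hq1r⟩ := Finset.mem_filter.1 hq1
  refine ⟨⟨q1, hq1B, hq1r, hq1v.symm⟩, ?_⟩
  intro q hqB hqr
  rw [pick2, dif_pos h2]
  exact Finset.min'_le _ _ (Finset.mem_image.2 ⟨q, Finset.mem_filter.2 ⟨hqB, hqr⟩, rfl⟩)

def selr (ht : 0 < t) (x y : Fin n → ZMod p) : Fin t := pick1 m ht (bad m π x y)

def sela (ht : 0 < t) (x y : Fin n → ZMod p) : ℕ :=
  pick2 m (bad m π x y) (selr m π ht x y)

lemma sel_facts (ht : 0 < t)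
    (hπ : Function.Bijective fun q : Σ r : Fin t, Fin (m r) => π q.1 (q.2 : ℕ))
    {x y : Fin n → ZMod p} (hxy : x ≠ y)
    (hagree : ∀ r, x (π r 0) = y (π r 0)) :
    1 ≤ sela m π ht x y ∧ sela m π ht x y < m (selr m π ht x y) ∧
      x (π (selr m π ht x y) (sela m π ht x y)) ≠ y (π (selr m π ht x y) (sela m π ht x y)) ∧
      ∀ b, b < sela m π ht x y →
        x (π (selr m π ht x y) b) = y (π (selr m π ht x y) b) := by
  obtain ⟨⟨q, hqB, hqr, hqa⟩, hmin⟩ := pick_spec m ht (bad m π x y) (bad_nonempty m π hπ.2 hxy)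
  have hsr : selr m π ht x y = pick1 m ht (bad m π x y) := rfl
  have hsa : sela m π ht x y = pick2 m (bad m π x y) (pick1 m ht (bad m π x y)) := rfl
  have hlt : sela m π ht x y < m (selr m π ht x y) := by
    rw [hsa, hsr, hqa, ← hqr]; exact q.2.isLt
  have hne : x (π (selr m π ht x y) (sela m π ht x y))
      ≠ y (π (selr m π ht x y) (sela m π ht x y)) := by
    rw [hsa, hsr, hqa, ← hqr]; exact (mem_bad m π).1 hqB
  have hF4 : ∀ b, b < sela m π ht x y →
      x (π (selr m π ht x y) b) = y (π (selr m π ht x y) b) := by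
    intro b hb
    by_contra hcon
    have hbm : b < m (selr m π ht x y) := hb.trans hlt
    have hmem : (⟨selr m π ht x y, ⟨b, hbm⟩⟩ : Σ r : Fin t, Fin (m r)) ∈ bad m π x y :=
      (mem_bad m π).2 hcon
    have h5 : pick2 m (bad m π x y) (pick1 m ht (bad m π x y)) ≤ b := hmin _ hmem hsr.symm
    omega
  have h1 : 1 ≤ sela m π ht x y := by
    by_contra hcon
    have h0 : sela m π ht x y = 0 := by omega
    rw [h0] at hne
    exact hne (hagree _)
  exact ⟨h1, hlt, hne, hF4⟩

lemma bad_update (x y : Fin n → ZMod p) (k : Fin n) (hk : x k = y k) (v : ZMod p) :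
    bad m π (Function.update x k (x k + v)) (Function.update y k (y k + v)) = bad m π x y := by
  ext q
  rw [mem_bad, mem_bad]
  by_cases hq : π q.1 (q.2 : ℕ) = k
  · rw [hq, Function.update_self, Function.update_self, hk]
    simp
  · rw [Function.update_of_ne hq, Function.update_of_ne hq]

lemma selr_update (ht : 0 < t) (x y : Fin n → ZMod p) (k : Fin n) (hk : x k = y k) (v : ZMod p) :
    selr m π ht (Function.update x k (x k + v)) (Function.update y k (y k + v))
      = selr m π ht x y := by
  unfold selr; rw [bad_update m π x y k hk v]

lemma sela_update (ht : 0 < t) (x y : Fin n → ZMod p) (k : Fin n) (hk : x k = y k) (v : ZMod p) :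
    sela m π ht (Function.update x k (x k + v)) (Function.update y k (y k + v))
      = sela m π ht x y := by
  unfold sela selr; rw [bad_update m π x y k hk v]

lemma lindiff (d : Fin n → ZMod p) (x : Fin n → ZMod p) (k : Fin n) (w : ZMod p) :
    ∑ α : Fin n, d α * (Function.update x k w α)
      = (∑ α : Fin n, d α * x α) + d k * (w - x k) := by
  have hfun : (fun α => d α * Function.update x k w α)
      = Function.update (fun α => d α * x α) k (d k * w) := by
    funext b
    by_cases hb : b = k
    · subst hb; simp
    · simp [Function.update_of_ne hb]
  rw [hfun, Finset.sum_update_of_mem (Finset.mem_univ k)]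
  rw [← Finset.sum_erase_add Finset.univ _ (Finset.mem_univ k), Finset.sdiff_singleton_eq_erase]
  ring

lemma Qdiff (hπ : Function.Injective fun q : Σ r : Fin t, Fin (m r) => π q.1 (q.2 : ℕ))
    (r0 : Fin t) (a0 : ℕ) (ha0 : a0 < m r0 - 1) (x : Fin n → ZMod p) (w : ZMod p) :
    (∑ r : Fin t, ∑ β ∈ Finset.range (m r - 1),
        (Function.update x (π r0 a0) w) (π r β) * (Function.update x (π r0 a0) w) (π r (β + 1)))
      = (∑ r : Fin t, ∑ β ∈ Finset.range (m r - 1), x (π r β) * x (π r (β + 1)))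
        + (w - x (π r0 a0)) *
          (x (π r0 (a0 + 1)) + (if 1 ≤ a0 then x (π r0 (a0 - 1)) else 0)) := by
  have hka : a0 < m r0 := by omega
  set k := π r0 a0 with hk
  have hstep : ∀ r : Fin t, ∀ β ∈ Finset.range (m r - 1),
      (Function.update x k w) (π r β) * (Function.update x k w) (π r (β + 1))
        = x (π r β) * x (π r (β + 1))
          + ((if π r β = k then (w - x k) * x (π r (β + 1)) else 0)
            + (if π r (β + 1) = k then x (π r β) * (w - x k) else 0)) := by
    intro r β hβ
    have hβ' : β < m r - 1 := Finset.mem_range.1 hβ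
    have hβm : β < m r := by omega
    have hβ1 : β + 1 < m r := by omega
    by_cases h1 : π r β = k
    · have h2 : π r (β + 1) ≠ k := by
        intro hc
        have e1 := pi_inj' m π hπ hβm hka h1
        have e2 := pi_inj' m π hπ hβ1 hka hc
        omega
      rw [h1, Function.update_self, Function.update_of_ne h2, if_pos rfl, if_neg h2]
      ring
    · by_cases h2 : π r (β + 1) = k
      · rw [Function.update_of_ne h1, h2, Function.update_self, if_neg h1, if_pos rfl]
        ring
      · rw [Function.update_of_ne h1, Function.update_of_ne h2, if_neg h1, if_neg h2]
        ring
  rw [Finset.sum_congr rfl fun r _ => Finset.sum_congr rfl (hstep r)]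
  simp only [Finset.sum_add_distrib]
  have hS1 : (∑ r : Fin t, ∑ β ∈ Finset.range (m r - 1),
      (if π r β = k then (w - x k) * x (π r (β + 1)) else 0))
      = (w - x k) * x (π r0 (a0 + 1)) := by
    rw [Finset.sum_eq_single r0]
    · have hcong : ∀ β ∈ Finset.range (m r0 - 1),
          (if π r0 β = k then (w - x k) * x (π r0 (β + 1)) else 0)
            = (if β = a0 then (w - x k) * x (π r0 (β + 1)) else 0) := by
        intro β hβ
        have hβm : β < m r0 := by have := Finset.mem_range.1 hβ; omega
        refine if_congr ⟨fun hc => (pi_inj' m π hπ hβm hka hc).2, fun hc => by rw [hc]⟩ rfl rfl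
      rw [Finset.sum_congr rfl hcong, Finset.sum_ite_eq' (Finset.range (m r0 - 1)) a0,
        if_pos (Finset.mem_range.2 ha0)]
    · intro r _ hr
      refine Finset.sum_eq_zero fun β hβ => ?_
      have hβm : β < m r := by have := Finset.mem_range.1 hβ; omega
      exact if_neg fun hc => hr (pi_inj' m π hπ hβm hka hc).1
    · intro habs; exact absurd (Finset.mem_univ r0) habs
  have hS2 : (∑ r : Fin t, ∑ β ∈ Finset.range (m r - 1),
      (if π r (β + 1) = k then x (π r β) * (w - x k) else 0))
      = (if 1 ≤ a0 then x (π r0 (a0 - 1)) * (w - x k) else 0) := by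
    by_cases h1a : 1 ≤ a0
    · rw [if_pos h1a, Finset.sum_eq_single r0]
      · have hcong : ∀ β ∈ Finset.range (m r0 - 1),
            (if π r0 (β + 1) = k then x (π r0 β) * (w - x k) else 0)
              = (if β = a0 - 1 then x (π r0 β) * (w - x k) else 0) := by
          intro β hβ
          have hβ1 : β + 1 < m r0 := by have := Finset.mem_range.1 hβ; omega
          refine if_congr ⟨fun hc => ?_, fun hc => ?_⟩ rfl rfl
          · have := (pi_inj' m π hπ hβ1 hka hc).2; omega
          · have hba : β + 1 = a0 := by omega
            rw [hk, ← hba]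
        rw [Finset.sum_congr rfl hcong, Finset.sum_ite_eq' (Finset.range (m r0 - 1)) (a0 - 1),
          if_pos (Finset.mem_range.2 (by omega))]
      · intro r _ hr
        refine Finset.sum_eq_zero fun β hβ => ?_
        have hβ1 : β + 1 < m r := by have := Finset.mem_range.1 hβ; omega
        exact if_neg fun hc => hr (pi_inj' m π hπ hβ1 hka hc).1
      · intro habs; exact absurd (Finset.mem_univ r0) habs
    · rw [if_neg h1a]
      refine Finset.sum_eq_zero fun r _ => Finset.sum_eq_zero fun β hβ => ?_
      have hβ1 : β + 1 < m r := by have := Finset.mem_range.1 hβ; omega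
      refine if_neg fun hc => ?_
      have := (pi_inj' m π hπ hβ1 hka hc).2
      omega
  rw [hS1, hS2]
  by_cases h1a : 1 ≤ a0
  · rw [if_pos h1a, if_pos h1a]; ring
  · rw [if_neg h1a, if_neg h1a]; ring

def lpos : Fin t → Fin n := fun r => π r (m r - 1)

def Gfun [NeZero p] (f : (Fin n → ZMod p) → ZMod p) (h h' : Fin t → ZMod p) :
    (Fin n → ZMod p) → (Fin n → ZMod p) → ZMod p := fun x y =>
  f x - f y + ((∑ r : Fin t, h r * x (lpos m π r)) - ∑ r : Fin t, h' r * y (lpos m π r))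

end Stmt0

namespace Stmt0

variable {p n t : ℕ} [NeZero p] (m : Fin t → ℕ) (π : Fin t → ℕ → Fin n)

lemma stepA (f : (Fin n → ZMod p) → ZMod p)
    (cseq : (Fin t → ZMod p) → (Fin t → ZMod p) → ℕ → ℂ)
    (hc : ∀ c s, cseq c s = psiSeq p n fun x =>
      f x + (∑ r : Fin t, s r * x (π r 0)) + ∑ r : Fin t, c r * x (π r (m r - 1)))
    (h h' : Fin t → ZMod p) (u : ℤ) :
    ∑ s : Fin t → ZMod p, aper (p ^ n) (cseq h s) (cseq h' s) u
      = (p : ℂ) ^ t * ∑ x : Fin n → ZMod p, ∑ y : Fin n → ZMod p,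
          if (((enc y : ℤ) - (enc x : ℤ) = u) ∧ ∀ r, x (π r 0) = y (π r 0)) then
            e p (Gfun m π f h h' x y) else 0 := by
  classical
  have hpsi : ∀ (g : (Fin n → ZMod p) → ZMod p) (x : Fin n → ZMod p),
      psiSeq p n g (enc x) = e p (g x) := by
    intro g x
    have hdig : (fun k : Fin n => digitZ p (enc x) (k : ℕ)) = x := funext fun k => digit_enc x k
    simp only [psiSeq]
    rw [hdig, e_apply]
  have hker : ∀ (s : Fin t → ZMod p) (x y : Fin n → ZMod p),
      cseq h s (enc x) * (starRingEnd ℂ) (cseq h' s (enc y))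
        = e p (Gfun m π f h h' x y)
          * ∏ r : Fin t, e p (s r * (x (π r 0) - y (π r 0))) := by
    intro s x y
    rw [hc, hc, hpsi, hpsi, e_conj, ← AddChar.map_add_eq_mul, ← e_sum,
      ← AddChar.map_add_eq_mul]
    congr 1
    simp only [Gfun, lpos]
    simp only [mul_sub]
    rw [Finset.sum_sub_distrib]
    ring
  have h1 : ∀ s : Fin t → ZMod p, aper (p ^ n) (cseq h s) (cseq h' s) u
      = ∑ x : Fin n → ZMod p, ∑ y : Fin n → ZMod p,
          if ((enc y : ℤ) - ((enc x : ℕ) : ℤ) = u) then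
            cseq h s (enc x) * (starRingEnd ℂ) (cseq h' s (enc y)) else 0 := by
    intro s
    calc aper (p ^ n) (cseq h s) (cseq h' s) u
        = ∑ x : Fin n → ZMod p, ∑ j ∈ Finset.range (p ^ n),
            if (j : ℤ) - ((enc x : ℕ) : ℤ) = u then
              cseq h s (enc x) * (starRingEnd ℂ) (cseq h' s j) else 0 :=
          sum_enc (fun i => ∑ j ∈ Finset.range (p ^ n),
            if (j : ℤ) - (i : ℤ) = u then cseq h s i * (starRingEnd ℂ) (cseq h' s j) else 0)
      _ = ∑ x : Fin n → ZMod p, ∑ y : Fin n → ZMod p,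
            if ((enc y : ℤ) - ((enc x : ℕ) : ℤ) = u) then
              cseq h s (enc x) * (starRingEnd ℂ) (cseq h' s (enc y)) else 0 :=
          Finset.sum_congr rfl fun x _ => sum_enc (fun j =>
            if (j : ℤ) - ((enc x : ℕ) : ℤ) = u then
              cseq h s (enc x) * (starRingEnd ℂ) (cseq h' s j) else 0)
  rw [Finset.sum_congr rfl fun s _ => h1 s]
  rw [Finset.sum_comm, Finset.mul_sum]
  refine Finset.sum_congr rfl fun x _ => ?_
  rw [Finset.sum_comm, Finset.mul_sum]
  refine Finset.sum_congr rfl fun y _ => ?_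
  by_cases hcond : ((enc y : ℤ) - (enc x : ℤ) = u)
  · simp only [if_pos hcond]
    rw [Finset.sum_congr rfl fun s _ => hker s x y]
    rw [← Finset.mul_sum]
    rw [← Fintype.prod_sum (f := fun (r : Fin t) (c : ZMod p) =>
      e p (c * (x (π r 0) - y (π r 0))))]
    simp only [e_sum_mul]
    by_cases hall : ∀ r, x (π r 0) = y (π r 0)
    · rw [if_pos ⟨hcond, hall⟩]
      have hz : ∀ r : Fin t, x (π r 0) - y (π r 0) = 0 := fun r => sub_eq_zero.2 (hall r)
      rw [Finset.prod_congr rfl fun r _ => if_pos (hz r)]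
      rw [Finset.prod_const, Finset.card_univ, Fintype.card_fin]
      ring
    · obtain ⟨r0, hr0⟩ := not_forall.1 hall
      rw [if_neg fun hcc => hall hcc.2, mul_zero]
      rw [Finset.prod_eq_zero (Finset.mem_univ r0)
        (show (if x (π r0 0) - y (π r0 0) = 0 then (p : ℂ) else 0) = 0 from
          if_neg fun hz => hr0 (sub_eq_zero.1 hz)), mul_zero]
  · rw [if_neg fun hcc => hcond hcc.1, mul_zero]
    simp only [if_neg hcond]
    exact Finset.sum_const_zero

lemma stepC (hm : ∀ r, 1 ≤ m r)
    (hπ : Function.Bijective fun q : Σ r : Fin t, Fin (m r) => π q.1 (q.2 : ℕ))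
    (f : (Fin n → ZMod p) → ZMod p) (h h' : Fin t → ZMod p) :
    ∑ x : Fin n → ZMod p, ∑ y : Fin n → ZMod p,
        (if (((enc y : ℤ) - (enc x : ℤ) = 0) ∧ ∀ r, x (π r 0) = y (π r 0)) then
          e p (Gfun m π f h h' x y) else 0)
      = if h = h' then (p : ℂ) ^ n else 0 := by
  classical
  have hdiag : ∀ x y : Fin n → ZMod p,
      ((((enc y : ℤ) - (enc x : ℤ) = 0) ∧ ∀ r, x (π r 0) = y (π r 0))) ↔ y = x := by
    intro x y
    constructor
    · rintro ⟨h1, -⟩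
      have h2 : (enc y : ℤ) = enc x := by omega
      exact enc_inj (Int.ofNat_inj.mp h2)
    · rintro rfl
      exact ⟨by ring, fun r => rfl⟩
  have hstep1 : ∑ x : Fin n → ZMod p, ∑ y : Fin n → ZMod p,
      (if (((enc y : ℤ) - (enc x : ℤ) = 0) ∧ ∀ r, x (π r 0) = y (π r 0)) then
        e p (Gfun m π f h h' x y) else 0)
      = ∑ x : Fin n → ZMod p, e p (Gfun m π f h h' x x) := by
    refine Finset.sum_congr rfl fun x _ => ?_
    rw [Finset.sum_congr rfl fun y _ => if_congr (hdiag x y) rfl rfl]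
    rw [Finset.sum_ite_eq' Finset.univ x (fun y => e p (Gfun m π f h h' x y)),
      if_pos (Finset.mem_univ x)]
  rw [hstep1]
  have hGxx : ∀ x : Fin n → ZMod p, Gfun m π f h h' x x
      = ∑ k : Fin n, (∑ r : Fin t, if lpos m π r = k then h r - h' r else 0) * x k := by
    intro x
    have hrhs : ∑ k : Fin n, (∑ r : Fin t, if lpos m π r = k then h r - h' r else 0) * x k
        = ∑ r : Fin t, (h r - h' r) * x (lpos m π r) := by
      simp only [Finset.sum_mul, ite_mul, zero_mul]
      rw [Finset.sum_comm]
      refine Finset.sum_congr rfl fun r _ => ?_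
      rw [Finset.sum_ite_eq Finset.univ (lpos m π r) (fun k => (h r - h' r) * x k),
        if_pos (Finset.mem_univ _)]
    rw [hrhs]
    simp only [Gfun]
    simp only [sub_mul]
    rw [Finset.sum_sub_distrib]
    ring
  rw [Finset.sum_congr rfl fun x _ => congrArg (e p) (hGxx x)]
  rw [lin_sum]
  by_cases hhh : h = h'
  · subst hhh
    rw [if_pos rfl]
    have hz : ∀ k : Fin n, (∑ r : Fin t, if lpos m π r = k then h r - h r else 0) = 0 := by
      intro k; simp
    rw [Finset.prod_congr rfl fun k _ => if_pos (hz k)]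
    rw [Finset.prod_const, Finset.card_univ, Fintype.card_fin]
  · rw [if_neg hhh]
    obtain ⟨r0, hr0⟩ := Function.ne_iff.1 hhh
    refine Finset.prod_eq_zero (Finset.mem_univ (lpos m π r0)) ?_
    have hval : (∑ r : Fin t, if lpos m π r = lpos m π r0 then h r - h' r else 0)
        = h r0 - h' r0 := by
      rw [Finset.sum_eq_single r0]
      · rw [if_pos rfl]
      · intro r _ hr
        refine if_neg fun hcc => hr ?_
        simp only [lpos] at hcc
        exact (pi_inj' m π hπ.1 (Nat.sub_lt (hm r) one_pos) (Nat.sub_lt (hm r0) one_pos) hcc).1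
      · intro habs; exact absurd (Finset.mem_univ r0) habs
    rw [hval, if_neg (sub_ne_zero.2 hr0)]

lemma Gshift (hm : ∀ r, 1 ≤ m r)
    (hπ : Function.Injective fun q : Σ r : Fin t, Fin (m r) => π q.1 (q.2 : ℕ))
    (d : Fin n → ZMod p) (f : (Fin n → ZMod p) → ZMod p)
    (hf : ∀ x, f x =
      (∑ r : Fin t, ∑ α ∈ Finset.range (m r - 1), x (π r α) * x (π r (α + 1))) +
        ∑ α : Fin n, d α * x α)
    (h h' : Fin t → ZMod p) (x y : Fin n → ZMod p)
    (r0 : Fin t) (α : ℕ) (hα1 : 1 ≤ α) (hαlt : α < m r0)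
    (hprev : ∀ b, b < α → x (π r0 b) = y (π r0 b)) (v : ZMod p) :
    Gfun m π f h h' (Function.update x (π r0 (α - 1)) (x (π r0 (α - 1)) + v))
        (Function.update y (π r0 (α - 1)) (y (π r0 (α - 1)) + v))
      = Gfun m π f h h' x y + v * (x (π r0 α) - y (π r0 α)) := by
  have ha0 : α - 1 < m r0 - 1 := by omega
  have hidx : α - 1 + 1 = α := by omega
  have hfx : f (Function.update x (π r0 (α - 1)) (x (π r0 (α - 1)) + v))
      = f x + v * (x (π r0 α) + (if 1 ≤ α - 1 then x (π r0 (α - 1 - 1)) else 0)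
          + d (π r0 (α - 1))) := by
    rw [hf (Function.update x (π r0 (α - 1)) (x (π r0 (α - 1)) + v)), hf x]
    rw [Qdiff m π hπ r0 (α - 1) ha0 x (x (π r0 (α - 1)) + v)]
    rw [lindiff d x (π r0 (α - 1)) (x (π r0 (α - 1)) + v)]
    rw [hidx]
    have hsimp : x (π r0 (α - 1)) + v - x (π r0 (α - 1)) = v := by ring
    rw [hsimp]
    ring
  have hfy : f (Function.update y (π r0 (α - 1)) (y (π r0 (α - 1)) + v))
      = f y + v * (y (π r0 α) + (if 1 ≤ α - 1 then y (π r0 (α - 1 - 1)) else 0)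
          + d (π r0 (α - 1))) := by
    rw [hf (Function.update y (π r0 (α - 1)) (y (π r0 (α - 1)) + v)), hf y]
    rw [Qdiff m π hπ r0 (α - 1) ha0 y (y (π r0 (α - 1)) + v)]
    rw [lindiff d y (π r0 (α - 1)) (y (π r0 (α - 1)) + v)]
    rw [hidx]
    have hsimp : y (π r0 (α - 1)) + v - y (π r0 (α - 1)) = v := by ring
    rw [hsimp]
    ring
  have hlne : ∀ r : Fin t, lpos m π r ≠ π r0 (α - 1) := by
    intro r hcc
    simp only [lpos] at hcc
    obtain ⟨rfl, h2⟩ := pi_inj' m π hπ (Nat.sub_lt (hm r) one_pos) (by omega) hcc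
    omega
  have hHx : (∑ r : Fin t, h r *
      (Function.update x (π r0 (α - 1)) (x (π r0 (α - 1)) + v)) (lpos m π r))
      = ∑ r : Fin t, h r * x (lpos m π r) :=
    Finset.sum_congr rfl fun r _ => by rw [Function.update_of_ne (hlne r)]
  have hHy : (∑ r : Fin t, h' r *
      (Function.update y (π r0 (α - 1)) (y (π r0 (α - 1)) + v)) (lpos m π r))
      = ∑ r : Fin t, h' r * y (lpos m π r) :=
    Finset.sum_congr rfl fun r _ => by rw [Function.update_of_ne (hlne r)]
  have hprev' : (if 1 ≤ α - 1 then x (π r0 (α - 1 - 1)) else 0)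
      = (if 1 ≤ α - 1 then y (π r0 (α - 1 - 1)) else 0) := by
    by_cases hcc : 1 ≤ α - 1
    · rw [if_pos hcc, if_pos hcc, hprev (α - 1 - 1) (by omega)]
    · rw [if_neg hcc, if_neg hcc]
  simp only [Gfun]
  rw [hfx, hfy, hHx, hHy, hprev']
  ring

end Stmt0

namespace Stmt0

variable {p n t : ℕ} [NeZero p] (m : Fin t → ℕ) (π : Fin t → ℕ → Fin n)

lemma stepB (ht : 0 < t) (hm : ∀ r, 1 ≤ m r)
    (hπ : Function.Bijective fun q : Σ r : Fin t, Fin (m r) => π q.1 (q.2 : ℕ))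
    (d : Fin n → ZMod p) (f : (Fin n → ZMod p) → ZMod p)
    (hf : ∀ x, f x =
      (∑ r : Fin t, ∑ α ∈ Finset.range (m r - 1), x (π r α) * x (π r (α + 1))) +
        ∑ α : Fin n, d α * x α)
    (h h' : Fin t → ZMod p) {u : ℤ} (hu : u ≠ 0) :
    ∑ x : Fin n → ZMod p, ∑ y : Fin n → ZMod p,
        (if (((enc y : ℤ) - (enc x : ℤ) = u) ∧ ∀ r, x (π r 0) = y (π r 0)) then
          e p (Gfun m π f h h' x y) else 0)
      = 0 := by
  classical
  set A : Finset ((Fin n → ZMod p) × (Fin n → ZMod p)) :=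
    Finset.univ.filter (fun a => ((enc a.2 : ℤ) - (enc a.1 : ℤ) = u)
      ∧ ∀ r, a.1 (π r 0) = a.2 (π r 0)) with hA
  have hsum : ∑ x : Fin n → ZMod p, ∑ y : Fin n → ZMod p,
      (if (((enc y : ℤ) - (enc x : ℤ) = u) ∧ ∀ r, x (π r 0) = y (π r 0)) then
        e p (Gfun m π f h h' x y) else 0)
      = ∑ a ∈ A, e p (Gfun m π f h h' a.1 a.2) := by
    rw [hA, Finset.sum_filter, ← Finset.univ_product_univ, Finset.sum_product]
  rw [hsum]
  have hmemA : ∀ a ∈ A, ((enc a.2 : ℤ) - (enc a.1 : ℤ) = u)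
      ∧ ∀ r, a.1 (π r 0) = a.2 (π r 0) := by
    intro a ha
    rw [hA, Finset.mem_filter] at ha
    exact ha.2
  have hxyA : ∀ a ∈ A, a.1 ≠ a.2 := by
    intro a ha hEq
    have h1 := (hmemA a ha).1
    rw [hEq, sub_self] at h1
    exact hu h1.symm
  have hfacts : ∀ a ∈ A,
      1 ≤ sela m π ht a.1 a.2 ∧ sela m π ht a.1 a.2 < m (selr m π ht a.1 a.2) ∧
        a.1 (π (selr m π ht a.1 a.2) (sela m π ht a.1 a.2))
          ≠ a.2 (π (selr m π ht a.1 a.2) (sela m π ht a.1 a.2)) ∧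
        ∀ b, b < sela m π ht a.1 a.2 →
          a.1 (π (selr m π ht a.1 a.2) b) = a.2 (π (selr m π ht a.1 a.2) b) :=
    fun a ha => sel_facts m π ht hπ (hxyA a ha) (hmemA a ha).2
  set q0 : ((Fin n → ZMod p) × (Fin n → ZMod p)) → Fin n :=
    fun a => π (selr m π ht a.1 a.2) (sela m π ht a.1 a.2 - 1) with hq0
  set δ : ((Fin n → ZMod p) × (Fin n → ZMod p)) → ZMod p :=
    fun a => a.1 (π (selr m π ht a.1 a.2) (sela m π ht a.1 a.2))
      - a.2 (π (selr m π ht a.1 a.2) (sela m π ht a.1 a.2)) with hδdef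
  set τ : ZMod p → ((Fin n → ZMod p) × (Fin n → ZMod p)) →
      ((Fin n → ZMod p) × (Fin n → ZMod p)) :=
    fun v a => (Function.update a.1 (q0 a) (a.1 (q0 a) + v),
      Function.update a.2 (q0 a) (a.2 (q0 a) + v)) with hτ
  have hagq : ∀ a ∈ A, a.1 (q0 a) = a.2 (q0 a) := by
    intro a ha
    obtain ⟨h1, -, -, h4⟩ := hfacts a ha
    exact h4 _ (by omega)
  have hmem : ∀ (v : ZMod p), ∀ a ∈ A, τ v a ∈ A := by
    intro v a ha
    obtain ⟨ha1, ha2⟩ := hmemA a ha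
    rw [hA, Finset.mem_filter]
    refine ⟨Finset.mem_univ _, ?_, ?_⟩
    · have e1 := enc_update a.1 (q0 a) (a.1 (q0 a) + v)
      have e2 := enc_update a.2 (q0 a) (a.2 (q0 a) + v)
      have hval : (((a.2 (q0 a) + v).val : ℤ) - ((a.2 (q0 a)).val : ℤ))
          = (((a.1 (q0 a) + v).val : ℤ) - ((a.1 (q0 a)).val : ℤ)) := by
        rw [hagq a ha]
      rw [hval] at e2
      show (enc (Function.update a.2 (q0 a) (a.2 (q0 a) + v)) : ℤ)
        - (enc (Function.update a.1 (q0 a) (a.1 (q0 a) + v)) : ℤ) = u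
      rw [e1, e2]
      linarith [ha1]
    · intro r
      show Function.update a.1 (q0 a) (a.1 (q0 a) + v) (π r 0)
        = Function.update a.2 (q0 a) (a.2 (q0 a) + v) (π r 0)
      by_cases hqr : π r 0 = q0 a
      · rw [hqr, Function.update_self, Function.update_self, hagq a ha]
      · rw [Function.update_of_ne hqr, Function.update_of_ne hqr]
        exact ha2 r
  have hq0inv : ∀ (v : ZMod p), ∀ a ∈ A, q0 (τ v a) = q0 a := by
    intro v a ha
    show π (selr m π ht (τ v a).1 (τ v a).2) (sela m π ht (τ v a).1 (τ v a).2 - 1)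
      = π (selr m π ht a.1 a.2) (sela m π ht a.1 a.2 - 1)
    have h1 : (τ v a).1 = Function.update a.1 (q0 a) (a.1 (q0 a) + v) := rfl
    have h2 : (τ v a).2 = Function.update a.2 (q0 a) (a.2 (q0 a) + v) := rfl
    rw [h1, h2, selr_update m π ht a.1 a.2 (q0 a) (hagq a ha) v,
      sela_update m π ht a.1 a.2 (q0 a) (hagq a ha) v]
  have hinv : ∀ (v : ZMod p), ∀ a ∈ A, τ (-v) (τ v a) = a := by
    intro v a ha
    have hq := hq0inv v a ha
    have hcomp1 : (τ (-v) (τ v a)).1 = a.1 := by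
      show Function.update (τ v a).1 (q0 (τ v a)) ((τ v a).1 (q0 (τ v a)) + (-v)) = a.1
      rw [hq]
      show Function.update (Function.update a.1 (q0 a) (a.1 (q0 a) + v)) (q0 a)
        ((Function.update a.1 (q0 a) (a.1 (q0 a) + v)) (q0 a) + (-v)) = a.1
      rw [Function.update_self, Function.update_idem]
      have hval : a.1 (q0 a) + v + (-v) = a.1 (q0 a) := by ring
      rw [hval, Function.update_eq_self]
    have hcomp2 : (τ (-v) (τ v a)).2 = a.2 := by
      show Function.update (τ v a).2 (q0 (τ v a)) ((τ v a).2 (q0 (τ v a)) + (-v)) = a.2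
      rw [hq]
      show Function.update (Function.update a.2 (q0 a) (a.2 (q0 a) + v)) (q0 a)
        ((Function.update a.2 (q0 a) (a.2 (q0 a) + v)) (q0 a) + (-v)) = a.2
      rw [Function.update_self, Function.update_idem]
      have hval : a.2 (q0 a) + v + (-v) = a.2 (q0 a) := by ring
      rw [hval, Function.update_eq_self]
    exact Prod.ext hcomp1 hcomp2
  have hbij : ∀ v : ZMod p,
      ∑ a ∈ A, e p (Gfun m π f h h' (τ v a).1 (τ v a).2)
        = ∑ a ∈ A, e p (Gfun m π f h h' a.1 a.2) := by
    intro v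
    refine Finset.sum_nbij' (τ v) (τ (-v)) (hmem v) (hmem (-v)) (hinv v) ?_ ?_
    · intro a ha
      have := hinv (-v) a ha
      rwa [neg_neg] at this
    · intro a _
      rfl
  have hGs : ∀ (v : ZMod p), ∀ a ∈ A,
      Gfun m π f h h' (τ v a).1 (τ v a).2 = Gfun m π f h h' a.1 a.2 + v * δ a := by
    intro v a ha
    obtain ⟨h1, h2, h3, h4⟩ := hfacts a ha
    show Gfun m π f h h'
        (Function.update a.1 (q0 a) (a.1 (q0 a) + v))
        (Function.update a.2 (q0 a) (a.2 (q0 a) + v)) = _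
    have hq0a : q0 a = π (selr m π ht a.1 a.2) (sela m π ht a.1 a.2 - 1) := rfl
    have hδa : δ a = a.1 (π (selr m π ht a.1 a.2) (sela m π ht a.1 a.2))
        - a.2 (π (selr m π ht a.1 a.2) (sela m π ht a.1 a.2)) := rfl
    rw [hq0a, hδa]
    exact Gshift m π hm hπ.1 d f hf h h' a.1 a.2
      (selr m π ht a.1 a.2) (sela m π ht a.1 a.2) h1 h2 h4 v
  have hδne : ∀ a ∈ A, δ a ≠ 0 := fun a ha => sub_ne_zero.2 (hfacts a ha).2.2.1
  have hfinal : (p : ℂ) * ∑ a ∈ A, e p (Gfun m π f h h' a.1 a.2) = 0 := by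
    have h2 : ∀ v : ZMod p, ∑ a ∈ A, e p (Gfun m π f h h' a.1 a.2)
        = ∑ a ∈ A, e p (Gfun m π f h h' a.1 a.2 + v * δ a) := by
      intro v
      rw [← hbij v]
      exact Finset.sum_congr rfl fun a ha => by rw [hGs v a ha]
    calc (p : ℂ) * ∑ a ∈ A, e p (Gfun m π f h h' a.1 a.2)
        = ∑ _v : ZMod p, ∑ a ∈ A, e p (Gfun m π f h h' a.1 a.2) := by
          rw [Finset.sum_const, Finset.card_univ, ZMod.card, nsmul_eq_mul]
      _ = ∑ v : ZMod p, ∑ a ∈ A, e p (Gfun m π f h h' a.1 a.2 + v * δ a) :=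
          Finset.sum_congr rfl fun v _ => h2 v
      _ = ∑ a ∈ A, ∑ v : ZMod p, e p (Gfun m π f h h' a.1 a.2 + v * δ a) :=
          Finset.sum_comm
      _ = ∑ a ∈ A, e p (Gfun m π f h h' a.1 a.2) * ∑ v : ZMod p, e p (v * δ a) := by
          refine Finset.sum_congr rfl fun a _ => ?_
          rw [Finset.mul_sum]
          exact Finset.sum_congr rfl fun v _ => AddChar.map_add_eq_mul _ _ _
      _ = 0 := by
          refine Finset.sum_eq_zero fun a ha => ?_
          rw [e_sum_mul, if_neg (hδne a ha), mul_zero]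
  have hpne : (p : ℂ) ≠ 0 := Nat.cast_ne_zero.2 (NeZero.ne p)
  exact (mul_eq_zero.1 hfinal).resolve_left hpne

end Stmt0

/-- Lemma 1: the family `{C_h : h ∈ (Z_p)^t}`, where
`C_h = {ψ(f + ∑_r s_r x_{π_r(1)} + ∑_r h_r x_{π_r(m_r)}) : s ∈ (Z_p)^t}`, is a
`(p^t, p^t, p^n)`-CCC.  Here the partition `{V_1,…,V_t}` of `{1,…,n}` together with the
bijections `π_r : {1,…,m_r} → V_r` is encoded (0-indexed) by maps `π r : ℕ → Fin n`
such that `(r, α) ↦ π r α` is a bijection from `Σ r, Fin (m r)` onto `Fin n`. -/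
theorem statement0 (p n t : ℕ) [Fact p.Prime] (hn : 1 ≤ n) (ht : 1 ≤ t) (htn : t ≤ n)
    (m : Fin t → ℕ) (hm : ∀ r, 1 ≤ m r)
    (π : Fin t → ℕ → Fin n)
    (hπ : Function.Bijective fun q : Σ r : Fin t, Fin (m r) => π q.1 (q.2 : ℕ))
    (d : Fin n → ZMod p)
    (f : (Fin n → ZMod p) → ZMod p)
    (hf : ∀ x, f x =
      (∑ r : Fin t, ∑ α ∈ Finset.range (m r - 1), x (π r α) * x (π r (α + 1))) +
        ∑ α : Fin n, d α * x α)
    (cseq : (Fin t → ZMod p) → (Fin t → ZMod p) → ℕ → ℂ)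
    (hc : ∀ h s, cseq h s = psiSeq p n fun x =>
      f x + (∑ r : Fin t, s r * x (π r 0)) + ∑ r : Fin t, h r * x (π r (m r - 1)))
    (h h' : Fin t → ZMod p) (u : ℤ) (hu : |u| < (p : ℤ) ^ n) :
    ∑ s : Fin t → ZMod p, aper (p ^ n) (cseq h s) (cseq h' s) u =
      if h = h' ∧ u = 0 then ((p : ℂ)) ^ (n + t) else 0 := by
  have hp : p ≠ 0 := (Fact.out : p.Prime).pos.ne'
  haveI : NeZero p := ⟨hp⟩
  rw [Stmt0.stepA m π f cseq hc h h' u]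
  by_cases hu0 : u = 0
  · subst hu0
    rw [Stmt0.stepC m π hm hπ f h h']
    by_cases hhh : h = h'
    · rw [if_pos hhh, if_pos ⟨hhh, rfl⟩, pow_add]
      ring
    · rw [if_neg hhh, if_neg (fun hcc => hhh hcc.1), mul_zero]
  · rw [Stmt0.stepB m π (by omega : 0 < t) hm hπ d f hf h h' hu0, mul_zero,
      if_neg (fun hcc => hu0 hcc.2)]
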